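/- Every α-chain is an e-chain: for any finite family of nonnegative s×s matrices M(y) summing to a stochastic matrix, and T the associated Markov operator on C(Δ), for each continuous f : Δ → ℝ the family of functions {T^n f : n ≥ 1} is equicontinuous on Δ. -/

import Mathlib

open Matrix

/-- The Markov operator of the α-chain. -/
noncomputable def alphaOp {s : ℕ} {Y : Type*} [Fintype Y]
    (M : Y → Matrix (Fin s) (Fin s) ℝ)
    (f : (Fin s → ℝ) → ℝ) (α : Fin s → ℝ) : ℝ :=
  ∑ y, (∑ j, (α ᵥ* M y) j) * f ((∑ j, (α ᵥ* M y) j)⁻¹ • (α ᵥ* M y))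

namespace StmtAux

variable {s : ℕ} {Y : Type*} [Fintype Y]

/-- The elementary "weight times value at normalized point" function. -/
noncomputable def gfun (f : (Fin s → ℝ) → ℝ) (α : Fin s → ℝ)
    (V : Matrix (Fin s) (Fin s) ℝ) : ℝ :=
  (∑ j, (α ᵥ* V) j) * f ((∑ j, (α ᵥ* V) j)⁻¹ • (α ᵥ* V))

omit [Fintype Y] in
lemma vecMul_apply (α : Fin s → ℝ) (A : Matrix (Fin s) (Fin s) ℝ) (j : Fin s) :
    (α ᵥ* A) j = ∑ i, α i * A i j := by
  simp [Matrix.vecMul, dotProduct]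

omit [Fintype Y] in
lemma vecMul_nonneg_entry {α : Fin s → ℝ} (hα : ∀ i, 0 ≤ α i)
    {A : Matrix (Fin s) (Fin s) ℝ} (hA : ∀ i j, 0 ≤ A i j) (j : Fin s) :
    0 ≤ (α ᵥ* A) j := by
  rw [vecMul_apply]
  exact Finset.sum_nonneg fun i _ => mul_nonneg (hα i) (hA i j)

/-- Ordered product of the matrices along a word. -/
noncomputable def Mprod (M : Y → Matrix (Fin s) (Fin s) ℝ) {n : ℕ}
    (w : Fin n → Y) : Matrix (Fin s) (Fin s) ℝ :=
  (List.ofFn fun i => M (w i)).prod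

omit [Fintype Y] in
lemma Mprod_zero (M : Y → Matrix (Fin s) (Fin s) ℝ) (w : Fin 0 → Y) :
    Mprod M w = 1 := by simp [Mprod]

omit [Fintype Y] in
lemma Mprod_cons (M : Y → Matrix (Fin s) (Fin s) ℝ) {n : ℕ} (y : Y) (w : Fin n → Y) :
    Mprod M (Fin.cons y w) = M y * Mprod M w := by
  simp [Mprod, List.ofFn_succ]

omit [Fintype Y] in
lemma Mprod_nonneg (M : Y → Matrix (Fin s) (Fin s) ℝ)
    (hpos : ∀ y i j, 0 ≤ M y i j) :
    ∀ {n : ℕ} (w : Fin n → Y) (i j : Fin s), 0 ≤ Mprod M w i j := by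
  intro n
  induction n with
  | zero =>
    intro w i j
    rw [Mprod_zero]
    by_cases h : i = j <;> simp [Matrix.one_apply, h]
  | succ n ih =>
    intro w i j
    rw [← Fin.cons_self_tail w, Mprod_cons, Matrix.mul_apply]
    exact Finset.sum_nonneg fun k _ => mul_nonneg (hpos _ i k) (ih _ k j)

lemma sum_cons {β : Type*} [AddCommMonoid β] (F : Matrix (Fin s) (Fin s) ℝ → β)
    (M : Y → Matrix (Fin s) (Fin s) ℝ) (n : ℕ) :
    ∑ w : Fin (n + 1) → Y, F (Mprod M w)
      = ∑ y : Y, ∑ w : Fin n → Y, F (M y * Mprod M w) := by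
  have h1 : ∑ p : Y × (Fin n → Y), F (M p.1 * Mprod M p.2)
      = ∑ w : Fin (n + 1) → Y, F (Mprod M w) :=
    Fintype.sum_equiv (Fin.consEquiv fun _ : Fin (n + 1) => Y) _ _ (fun p => by
      simp only [Fin.consEquiv, Equiv.coe_fn_mk, Mprod_cons])
  rw [← h1, Fintype.sum_prod_type]

lemma sum_Mprod (M : Y → Matrix (Fin s) (Fin s) ℝ) :
    ∀ n : ℕ, ∑ w : Fin n → Y, Mprod M w = (∑ y, M y) ^ n := by
  intro n
  induction n with
  | zero =>
    rw [pow_zero]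
    rw [Fintype.sum_eq_single (fun i : Fin 0 => (Fin.elim0 i : Y))]
    · exact Mprod_zero M _
    · intro w hw
      exact absurd (funext fun i => Fin.elim0 i) hw
  | succ n ih =>
    rw [sum_cons (fun A => A) M n, pow_succ']
    rw [← ih]
    rw [Finset.sum_mul]
    exact Finset.sum_congr rfl fun y _ => (Finset.mul_sum _ _ _).symm

omit [Fintype Y] in
lemma vecMul_smul_matrix (α : Fin s → ℝ) (c : ℝ) (V : Matrix (Fin s) (Fin s) ℝ) :
    α ᵥ* (c • V) = c • (α ᵥ* V) := by
  funext j
  simp only [vecMul_apply, Matrix.smul_apply, Pi.smul_apply, smul_eq_mul]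
  rw [Finset.mul_sum]
  exact Finset.sum_congr rfl fun i _ => by ring

omit [Fintype Y] in
/-- Homogeneity of `gfun` in the matrix variable. -/
lemma gfun_smul (f : (Fin s → ℝ) → ℝ) (α : Fin s → ℝ)
    (V : Matrix (Fin s) (Fin s) ℝ) {c : ℝ} (hc : 0 < c) :
    gfun f α (c • V) = c * gfun f α V := by
  have h1 : α ᵥ* (c • V) = c • (α ᵥ* V) := vecMul_smul_matrix α c V
  have h2 : (∑ j, (α ᵥ* (c • V)) j) = c * ∑ j, (α ᵥ* V) j := by
    rw [h1]; simp [Finset.mul_sum]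
  unfold gfun
  rw [h2, h1]
  rcases eq_or_ne (∑ j, (α ᵥ* V) j) 0 with h | h
  · simp [h]
  · have : (c * ∑ j, (α ᵥ* V) j)⁻¹ • c • (α ᵥ* V)
        = (∑ j, (α ᵥ* V) j)⁻¹ • (α ᵥ* V) := by
      rw [smul_smul, mul_inv]
      congr 1
      rw [mul_comm c⁻¹, mul_assoc, inv_mul_cancel₀ hc.ne', mul_one]
    rw [this]; ring

omit [Fintype Y] in
/-- Key recursion step. -/
lemma gfun_rec (f : (Fin s → ℝ) → ℝ) (α : Fin s → ℝ) (hα : ∀ i, 0 ≤ α i)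
    (A : Matrix (Fin s) (Fin s) ℝ) (hA : ∀ i j, 0 ≤ A i j)
    (V : Matrix (Fin s) (Fin s) ℝ) :
    (∑ j, (α ᵥ* A) j) * gfun f ((∑ j, (α ᵥ* A) j)⁻¹ • (α ᵥ* A)) V
      = gfun f α (A * V) := by
  have hnn : ∀ j, 0 ≤ (α ᵥ* A) j := vecMul_nonneg_entry hα hA
  rcases eq_or_ne (∑ j, (α ᵥ* A) j) 0 with h0 | h0
  · have hz : α ᵥ* A = 0 := by
      funext j
      simpa using
        (Finset.sum_eq_zero_iff_of_nonneg (fun j _ => hnn j)).1 h0 j (Finset.mem_univ j)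
    have hz2 : α ᵥ* (A * V) = 0 := by
      rw [← Matrix.vecMul_vecMul, hz]
      funext j; simp [vecMul_apply]
    simp [gfun, h0, hz2]
  · have key : ((∑ j, (α ᵥ* A) j)⁻¹ • (α ᵥ* A)) ᵥ* V
        = (∑ j, (α ᵥ* A) j)⁻¹ • (α ᵥ* (A * V)) := by
      rw [Matrix.smul_vecMul, Matrix.vecMul_vecMul]
    set c : ℝ := ∑ j, (α ᵥ* A) j with hc
    unfold gfun
    rw [key]
    set d : ℝ := ∑ j, (α ᵥ* (A * V)) j with hd
    have hsum : (∑ j, (c⁻¹ • (α ᵥ* (A * V))) j) = c⁻¹ * d := by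
      simp [Finset.mul_sum, hd]
    rw [hsum]
    have harg : (c⁻¹ * d)⁻¹ • c⁻¹ • (α ᵥ* (A * V)) = d⁻¹ • (α ᵥ* (A * V)) := by
      rw [smul_smul, mul_inv, inv_inv]
      congr 1
      rw [mul_comm c d⁻¹, mul_assoc, mul_inv_cancel₀ h0, mul_one]
    rw [harg]
    have hcd : c * (c⁻¹ * d) = d := by field_simp
    rw [← mul_assoc, hcd]

/-- Word expansion of the iterates of the Markov operator. -/
lemma iterate_eq_sum_words (M : Y → Matrix (Fin s) (Fin s) ℝ)
    (hpos : ∀ y i j, 0 ≤ M y i j)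
    (f : (Fin s → ℝ) → ℝ) :
    ∀ n : ℕ, ∀ α ∈ stdSimplex ℝ (Fin s),
      (alphaOp M)^[n] f α = ∑ w : Fin n → Y, gfun f α (Mprod M w) := by
  intro n
  induction n with
  | zero =>
    intro α hα
    have key : ∀ w : Fin 0 → Y, gfun f α (Mprod M w) = f α := by
      intro w
      rw [Mprod_zero]
      unfold gfun
      rw [Matrix.vecMul_one, hα.2]
      simp
    simp only [Function.iterate_zero, id_eq, key]
    simp
  | succ n ih =>
    intro α hα
    rw [Function.iterate_succ_apply']
    have expand : alphaOp M ((alphaOp M)^[n] f) α = ∑ y, (∑ j, (α ᵥ* M y) j) *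
        ((alphaOp M)^[n] f) ((∑ j, (α ᵥ* M y) j)⁻¹ • (α ᵥ* M y)) := rfl
    rw [expand]
    have step : ∀ y : Y, (∑ j, (α ᵥ* M y) j) *
        ((alphaOp M)^[n] f) ((∑ j, (α ᵥ* M y) j)⁻¹ • (α ᵥ* M y))
        = ∑ w : Fin n → Y, gfun f α (M y * Mprod M w) := by
      intro y
      have hnn : ∀ j, 0 ≤ (α ᵥ* M y) j := vecMul_nonneg_entry hα.1 (hpos y)
      rcases eq_or_ne (∑ j, (α ᵥ* M y) j) 0 with h0 | h0
      · rw [h0, zero_mul]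
        symm
        apply Finset.sum_eq_zero
        intro w _
        rw [← gfun_rec f α hα.1 (M y) (hpos y) (Mprod M w), h0, zero_mul]
      · -- normalized point is in the simplex
        have hc : 0 < ∑ j, (α ᵥ* M y) j :=
          lt_of_le_of_ne (Finset.sum_nonneg fun j _ => hnn j) (Ne.symm h0)
        have hmem : ((∑ j, (α ᵥ* M y) j)⁻¹ • (α ᵥ* M y)) ∈ stdSimplex ℝ (Fin s) := by
          constructor
          · intro j
            exact mul_nonneg (inv_nonneg.2 hc.le) (hnn j)
          · simp only [Pi.smul_apply, smul_eq_mul, ← Finset.mul_sum]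
            exact inv_mul_cancel₀ h0
        rw [ih _ hmem, Finset.mul_sum]
        exact Finset.sum_congr rfl fun w _ =>
          gfun_rec f α hα.1 (M y) (hpos y) (Mprod M w)
    rw [Finset.sum_congr rfl fun y _ => step y]
    exact (sum_cons (gfun f α) M n).symm

/-- The compact set of normalized nonnegative matrices. -/
def Wset (s : ℕ) : Set (Fin s → Fin s → ℝ) :=
  {V | (∀ i j, 0 ≤ V i j) ∧ ∑ i, ∑ j, V i j = 1}

omit [Fintype Y] in
lemma Wset_isCompact : IsCompact (Wset s) := by
  have h1 : IsCompact (Set.pi Set.univ fun _ : Fin s =>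
      (Set.pi Set.univ fun _ : Fin s => Set.Icc (0:ℝ) 1)) :=
    isCompact_univ_pi fun _ => isCompact_univ_pi fun _ => isCompact_Icc
  have hclosed : IsClosed (Wset s) := by
    have e1 : IsClosed {V : Fin s → Fin s → ℝ | ∀ i j, 0 ≤ V i j} := by
      have : {V : Fin s → Fin s → ℝ | ∀ i j, 0 ≤ V i j}
          = ⋂ i, ⋂ j, {V : Fin s → Fin s → ℝ | 0 ≤ V i j} := by
        ext V; simp [Set.mem_iInter]
      rw [this]
      refine isClosed_iInter fun i => isClosed_iInter fun j => ?_
      exact isClosed_le continuous_const ((continuous_apply j).comp (continuous_apply i))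
    have e2 : IsClosed {V : Fin s → Fin s → ℝ | ∑ i, ∑ j, V i j = 1} := by
      refine isClosed_eq ?_ continuous_const
      exact continuous_finset_sum _ fun i _ => continuous_finset_sum _ fun j _ =>
        (continuous_apply j).comp (continuous_apply i)
    exact e1.inter e2
  refine IsCompact.of_isClosed_subset h1 hclosed ?_
  intro V hV
  refine fun i _ j _ => ⟨hV.1 i j, ?_⟩
  calc V i j ≤ ∑ j', V i j' :=
        Finset.single_le_sum (fun j' _ => hV.1 i j') (Finset.mem_univ j)
    _ ≤ ∑ i', ∑ j', V i' j' :=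
        Finset.single_le_sum (fun i' _ => Finset.sum_nonneg fun j' _ => hV.1 i' j')
          (Finset.mem_univ i)
    _ = 1 := hV.2

omit [Fintype Y] in
/-- Continuity of the elementary function on the compact product set. -/
lemma gfun_continuousOn (f : (Fin s → ℝ) → ℝ)
    (hf : ContinuousOn f (stdSimplex ℝ (Fin s)))
    (C : ℝ) (hC : ∀ x ∈ stdSimplex ℝ (Fin s), |f x| ≤ C) :
    ContinuousOn (fun p : (Fin s → ℝ) × (Fin s → Fin s → ℝ) => gfun f p.1 p.2)
      (stdSimplex ℝ (Fin s) ×ˢ Wset s) := by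
  set K := stdSimplex ℝ (Fin s) ×ˢ Wset s with hKdef
  set t : ((Fin s → ℝ) × (Fin s → Fin s → ℝ)) → ℝ := fun p => ∑ j, (p.1 ᵥ* p.2) j
    with htdef
  have htcont : Continuous t := by
    apply continuous_finset_sum
    intro j _
    have : (fun p : (Fin s → ℝ) × (Fin s → Fin s → ℝ) => (p.1 ᵥ* p.2) j)
        = fun p => ∑ i, p.1 i * p.2 i j := funext fun p => vecMul_apply p.1 p.2 j
    rw [this]
    apply continuous_finset_sum
    intro i _
    exact ((continuous_apply i).comp continuous_fst).mul
      ((continuous_apply j).comp ((continuous_apply i).comp continuous_snd))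
  have htnn : ∀ p ∈ K, 0 ≤ t p := by
    intro p hp
    exact Finset.sum_nonneg fun j _ =>
      vecMul_nonneg_entry (fun i => hp.1.1 i) hp.2.1 j
  have hNmem : ∀ p ∈ K, 0 < t p → ((t p)⁻¹ • (p.1 ᵥ* p.2)) ∈ stdSimplex ℝ (Fin s) := by
    intro p hp hpos
    constructor
    · intro j
      exact mul_nonneg (inv_nonneg.2 hpos.le)
        (vecMul_nonneg_entry (fun i => hp.1.1 i) hp.2.1 j)
    · simp only [Pi.smul_apply, smul_eq_mul, ← Finset.mul_sum]
      exact inv_mul_cancel₀ hpos.ne'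
  have habs : ∀ p ∈ K, |gfun f p.1 p.2| ≤ C * t p := by
    intro p hp
    rcases eq_or_lt_of_le (htnn p hp) with h0 | hpos
    · have hz : gfun f p.1 p.2 = 0 := by
        show t p * f ((t p)⁻¹ • (p.1 ᵥ* p.2)) = 0
        rw [← h0, zero_mul]
      rw [hz, ← h0, abs_zero, mul_zero]
    · have hmem := hNmem p hp hpos
      have : gfun f p.1 p.2 = t p * f ((t p)⁻¹ • (p.1 ᵥ* p.2)) := rfl
      rw [this, abs_mul, abs_of_nonneg hpos.le, mul_comm]
      exact mul_le_mul_of_nonneg_right (hC _ hmem) hpos.le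
  intro p₀ hp₀
  rcases eq_or_lt_of_le (htnn p₀ hp₀) with h0 | hpos
  · -- squeeze to zero
    have hG0 : gfun f p₀.1 p₀.2 = 0 := by
      show t p₀ * f ((t p₀)⁻¹ • (p₀.1 ᵥ* p₀.2)) = 0
      rw [← h0, zero_mul]
    rw [ContinuousWithinAt, hG0]
    apply squeeze_zero_norm'
    · filter_upwards [self_mem_nhdsWithin] with p hp
      simpa [Real.norm_eq_abs] using habs p hp
    · have h1 : Filter.Tendsto (fun p => C * t p) (nhdsWithin p₀ K) (nhds (C * t p₀)) :=
        ((continuous_const.mul htcont).continuousAt).continuousWithinAt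
      rw [← h0, mul_zero] at h1
      exact h1
  · -- positive mass: composition
    have hUopen : IsOpen {p : (Fin s → ℝ) × (Fin s → Fin s → ℝ) | 0 < t p} :=
      isOpen_lt continuous_const htcont
    rw [← continuousWithinAt_inter (hUopen.mem_nhds hpos)]
    set N : ((Fin s → ℝ) × (Fin s → Fin s → ℝ)) → (Fin s → ℝ) :=
      fun p => (t p)⁻¹ • (p.1 ᵥ* p.2) with hNdef
    have hNcont : ContinuousAt N p₀ := by
      refine ContinuousAt.smul (f := fun p => (t p)⁻¹) (g := fun p => p.1 ᵥ* p.2) ?_ ?_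
      · exact (htcont.continuousAt).inv₀ hpos.ne'
      · apply Continuous.continuousAt
        apply continuous_pi
        intro j
        have : (fun p : (Fin s → ℝ) × (Fin s → Fin s → ℝ) => (p.1 ᵥ* p.2) j)
            = fun p => ∑ i, p.1 i * p.2 i j := funext fun p => vecMul_apply p.1 p.2 j
        rw [this]
        apply continuous_finset_sum
        intro i _
        exact ((continuous_apply i).comp continuous_fst).mul
          ((continuous_apply j).comp ((continuous_apply i).comp continuous_snd))
    have hshow : (fun p : (Fin s → ℝ) × (Fin s → Fin s → ℝ) => gfun f p.1 p.2)
        = fun p => t p * f (N p) := rfl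
    rw [hshow]
    apply ContinuousWithinAt.mul
    · exact (htcont.continuousAt).continuousWithinAt
    · refine ContinuousWithinAt.comp (hf _ (hNmem p₀ hp₀ hpos)) hNcont.continuousWithinAt ?_
      intro p hp
      exact hNmem p hp.1 hp.2

end StmtAux

open StmtAux in
/-- Every α-chain is an e-chain. -/
theorem stmt7 (s : ℕ) (Y : Type*) [Fintype Y]
    (M : Y → Matrix (Fin s) (Fin s) ℝ)
    (hpos : ∀ y i j, 0 ≤ M y i j)
    (hstoch : ∀ i, ∑ j, (∑ y, M y) i j = 1)
    (f : (Fin s → ℝ) → ℝ) (hf : ContinuousOn f (stdSimplex ℝ (Fin s))) :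
    EquicontinuousOn (fun n : ℕ => (alphaOp M)^[n + 1] f)
      (stdSimplex ℝ (Fin s)) := by
  classical
  -- bound for |f| on the simplex
  obtain ⟨C₀, hC₀⟩ := (isCompact_stdSimplex ℝ (Fin s)).exists_bound_of_continuousOn hf
  set C : ℝ := max C₀ 0 with hCdef
  have hC : ∀ x ∈ stdSimplex ℝ (Fin s), |f x| ≤ C := fun x hx =>
    le_trans (by simpa [Real.norm_eq_abs] using hC₀ x hx) (le_max_left _ _)
  -- the compact product set and uniform continuity of gfun on it
  have hKcompact : IsCompact (stdSimplex ℝ (Fin s) ×ˢ Wset s) :=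
    (isCompact_stdSimplex ℝ (Fin s)).prod (Wset_isCompact (s := s))
  have hGuc := hKcompact.uniformContinuousOn_of_continuous
    (gfun_continuousOn (s := s) f hf C hC)
  rw [Metric.uniformContinuousOn_iff] at hGuc
  -- row sums of powers of the stochastic matrix
  have hrow : ∀ k : ℕ, ∀ i, ∑ j, ((∑ y, M y) ^ k) i j = 1 := by
    intro k
    induction k with
    | zero => intro i; simp [Matrix.one_apply]
    | succ k ih =>
      intro i
      rw [pow_succ']
      have : ∀ j, ((∑ y, M y) * (∑ y, M y) ^ k) i j
          = ∑ m, (∑ y, M y) i m * ((∑ y, M y) ^ k) m j := fun j => Matrix.mul_apply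
      simp only [this]
      rw [Finset.sum_comm]
      calc ∑ m, ∑ j, (∑ y, M y) i m * ((∑ y, M y) ^ k) m j
          = ∑ m, (∑ y, M y) i m * ∑ j, ((∑ y, M y) ^ k) m j := by
            exact Finset.sum_congr rfl fun m _ => (Finset.mul_sum _ _ _).symm
        _ = ∑ m, (∑ y, M y) i m := by
            exact Finset.sum_congr rfl fun m _ => by rw [ih m, mul_one]
        _ = 1 := hstoch i
  -- total mass of all words of a given length
  have hmass : ∀ k : ℕ, ∑ w : Fin k → Y, (∑ i, ∑ j, Mprod M w i j) = s := by
    intro k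
    have h1 : ∑ w : Fin k → Y, (∑ i, ∑ j, Mprod M w i j)
        = ∑ i, ∑ j, (∑ w : Fin k → Y, Mprod M w) i j := by
      rw [Finset.sum_comm]
      refine Finset.sum_congr rfl fun i _ => ?_
      rw [Finset.sum_comm]
      refine Finset.sum_congr rfl fun j _ => ?_
      rw [Matrix.sum_apply]
    rw [h1, sum_Mprod]
    calc ∑ i, ∑ j, ((∑ y, M y) ^ k) i j = ∑ i : Fin s, (1:ℝ) :=
          Finset.sum_congr rfl fun i _ => hrow k i
      _ = s := by simp
  -- setting up the equicontinuity proof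
  intro α₀ hα₀ U hU
  obtain ⟨ε, hε, hUε⟩ := Metric.mem_uniformity_dist.1 hU
  have hε' : (0:ℝ) < ε / (s + 1) := by positivity
  obtain ⟨δ, hδ, hδ'⟩ := hGuc (ε / (s + 1)) hε'
  have hball : ∀ᶠ α in nhdsWithin α₀ (stdSimplex ℝ (Fin s)), dist α₀ α < δ :=
    Filter.Eventually.filter_mono nhdsWithin_le_nhds
      (by filter_upwards [Metric.ball_mem_nhds α₀ hδ] with α hα using
        (by rw [dist_comm]; exact Metric.mem_ball.1 hα))
  filter_upwards [hball, self_mem_nhdsWithin] with α hdist hα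
  intro n
  apply hUε
  -- the main estimate
  rw [iterate_eq_sum_words M hpos f (n + 1) α₀ hα₀,
    iterate_eq_sum_words M hpos f (n + 1) α hα, Real.dist_eq, ← Finset.sum_sub_distrib]
  have hterm : ∀ w : Fin (n + 1) → Y,
      |gfun f α₀ (Mprod M w) - gfun f α (Mprod M w)|
        ≤ (∑ i, ∑ j, Mprod M w i j) * (ε / (s + 1)) := by
    intro w
    set c : ℝ := ∑ i, ∑ j, Mprod M w i j with hc
    have hcnn : 0 ≤ c :=
      Finset.sum_nonneg fun i _ => Finset.sum_nonneg fun j _ => Mprod_nonneg M hpos w i j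
    rcases eq_or_lt_of_le hcnn with h0 | hcpos
    · -- the matrix is zero
      have hzero : Mprod M w = 0 := by
        funext i j
        have h1 : ∀ i' ∈ Finset.univ, (0:ℝ) ≤ ∑ j', Mprod M w i' j' :=
          fun i' _ => Finset.sum_nonneg fun j' _ => Mprod_nonneg M hpos w i' j'
        have h2 := (Finset.sum_eq_zero_iff_of_nonneg h1).1 h0.symm i (Finset.mem_univ i)
        have h3 := (Finset.sum_eq_zero_iff_of_nonneg
          (fun j' _ => Mprod_nonneg M hpos w i j')).1 h2 j (Finset.mem_univ j)
        simpa using h3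
      have hgz : ∀ β : Fin s → ℝ, gfun f β (Mprod M w) = 0 := by
        intro β
        rw [hzero]
        show (∑ j, (β ᵥ* (0 : Matrix (Fin s) (Fin s) ℝ)) j) * _ = 0
        simp [Matrix.vecMul_zero]
      rw [hgz, hgz, sub_zero, abs_zero, ← h0, zero_mul]
    · -- normalize
      set V : Matrix (Fin s) (Fin s) ℝ := c⁻¹ • Mprod M w with hV
      have hVW : V ∈ Wset s := by
        constructor
        · intro i j
          exact mul_nonneg (inv_nonneg.2 hcnn) (Mprod_nonneg M hpos w i j)
        · rw [hV]
          simp only [Matrix.smul_apply, smul_eq_mul, ← Finset.mul_sum]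
          exact inv_mul_cancel₀ hcpos.ne'
      have hMw : Mprod M w = c • V := (smul_inv_smul₀ hcpos.ne' _).symm
      have hg1 : gfun f α₀ (Mprod M w) = c * gfun f α₀ V := by
        rw [hMw]; exact gfun_smul f α₀ V hcpos
      have hg2 : gfun f α (Mprod M w) = c * gfun f α V := by
        rw [hMw]; exact gfun_smul f α V hcpos
      rw [hg1, hg2, ← mul_sub, abs_mul, abs_of_nonneg hcnn]
      apply mul_le_mul_of_nonneg_left _ hcnn
      have hmem1 : ((α₀, V) : (Fin s → ℝ) × (Fin s → Fin s → ℝ))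
          ∈ stdSimplex ℝ (Fin s) ×ˢ Wset s := ⟨hα₀, hVW⟩
      have hmem2 : ((α, V) : (Fin s → ℝ) × (Fin s → Fin s → ℝ))
          ∈ stdSimplex ℝ (Fin s) ×ˢ Wset s := ⟨hα, hVW⟩
      have hd : dist ((α₀, V) : (Fin s → ℝ) × (Fin s → Fin s → ℝ)) (α, V) < δ := by
        rw [Prod.dist_eq]
        simp only [dist_self]
        exact max_lt hdist (lt_of_eq_of_lt (dist_self _) hδ)
      have := hδ' _ hmem1 _ hmem2 hd
      rw [Real.dist_eq] at this
      exact this.le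
  calc |∑ w : Fin (n + 1) → Y, (gfun f α₀ (Mprod M w) - gfun f α (Mprod M w))|
      ≤ ∑ w : Fin (n + 1) → Y, |gfun f α₀ (Mprod M w) - gfun f α (Mprod M w)| :=
        Finset.abs_sum_le_sum_abs _ _
    _ ≤ ∑ w : Fin (n + 1) → Y, (∑ i, ∑ j, Mprod M w i j) * (ε / (s + 1)) :=
        Finset.sum_le_sum fun w _ => hterm w
    _ = (∑ w : Fin (n + 1) → Y, ∑ i, ∑ j, Mprod M w i j) * (ε / (s + 1)) :=
        (Finset.sum_mul _ _ _).symm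
    _ = s * (ε / (s + 1)) := by rw [hmass (n + 1)]
    _ < ε := by
        have hs1 : (0:ℝ) < (s:ℝ) + 1 := by positivity
        rw [mul_div_assoc', div_lt_iff₀ hs1]
        nlinarith
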